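/- Let α ∈ (1/2, 1) and U(t,x) = t^α u(t,x). Then: (a) U(0,x) = 0 for every x ∈ ℝ; (b) for a.e. t ∈ (0,1) and every x ∈ ℝ, −∂_t U(t,x) + a(t)∂²_{xx}U(t,x) = F(t,x), where F(t,x) = −α t^{α−1} u(t,x); (c) for every R > 0, ∫₀^1 ∫_{−R}^{R} F(t,x)² dx dt < ∞, i.e. F ∈ L²((0,1), L²_loc(ℝ)). -/

import Mathlib

open MeasureTheory Set
open scoped ENNReal

noncomputable section

open Filter

lemma ae_hasDerivAt_primitive {f : ℝ → ℝ} (hf : Integrable f (volume : Measure ℝ)) :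
    ∀ᵐ t : ℝ, HasDerivAt (fun s => ∫ τ in (0:ℝ)..s, f τ) (f t) t := by
  filter_upwards [IsUnifLocDoublingMeasure.ae_tendsto_average_norm_sub
    (μ := (volume : Measure ℝ)) hf.locallyIntegrable 1] with t ht
  rw [hasDerivAt_iff_tendsto_slope, tendsto_iff_norm_sub_tendsto_zero]
  have hΦ : Tendsto (fun s : ℝ => ⨍ y in Metric.closedBall ((t+s)/2) (|s-t|/2),
      ‖f y - f t‖) (nhdsWithin t {t}ᶜ) (nhds 0) := by
    apply ht (fun s => (t+s)/2) (fun s => |s-t|/2)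
    · rw [tendsto_nhdsWithin_iff]
      constructor
      · have : Tendsto (fun s : ℝ => |s - t|/2) (nhds t) (nhds (|t - t|/2)) :=
          (((continuous_id.sub continuous_const).abs.div_const 2).tendsto t)
        simp only [sub_self, abs_zero, zero_div] at this
        exact this.mono_left nhdsWithin_le_nhds
      · filter_upwards [self_mem_nhdsWithin] with s hs
        have : s ≠ t := hs
        simp [mem_Ioi, abs_pos, sub_ne_zero.2 this]
    · filter_upwards with s
      simp only [Metric.mem_closedBall, Real.dist_eq, one_mul]
      rw [abs_sub_comm s t]
      have : t - (t + s)/2 = (t - s)/2 := by ring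
      rw [this, abs_div]
      simp [abs_of_pos]
  apply squeeze_zero' (Eventually.of_forall fun s => norm_nonneg _) _ hΦ
  filter_upwards [self_mem_nhdsWithin] with s hs
  have hst : s ≠ t := hs
  have hne : s - t ≠ 0 := sub_ne_zero.2 hst
  have hd : (0:ℝ) < |s - t| := abs_pos.2 hne
  have e1 : (t+s)/2 - |s-t|/2 = min t s := by
    rcases le_total t s with h | h
    · rw [abs_of_nonneg (by linarith), min_eq_left h]; ring
    · rw [abs_of_nonpos (by linarith), min_eq_right h]; ring
  have e2 : (t+s)/2 + |s-t|/2 = max t s := by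
    rcases le_total t s with h | h
    · rw [abs_of_nonneg (by linarith), max_eq_right h]; ring
    · rw [abs_of_nonpos (by linarith), max_eq_left h]; ring
  have hball : Metric.closedBall ((t+s)/2) (|s-t|/2) = Icc (min t s) (max t s) := by
    rw [Real.closedBall_eq_Icc, e1, e2]
  have hvol : (volume (Metric.closedBall ((t+s)/2) (|s-t|/2))).toReal = |s - t| := by
    rw [Real.volume_closedBall, ENNReal.toReal_ofReal (by positivity)]
    ring
  rw [setAverage_eq, measureReal_def, hvol]
  have hFsub : (∫ τ in (0:ℝ)..s, f τ) - (∫ τ in (0:ℝ)..t, f τ) = ∫ τ in t..s, f τ :=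
    intervalIntegral.integral_interval_sub_left hf.intervalIntegrable hf.intervalIntegrable
  have hslope : slope (fun s => ∫ τ in (0:ℝ)..s, f τ) t s - f t
      = (s - t)⁻¹ * (∫ τ in t..s, (f τ - f t)) := by
    rw [slope_def_field, intervalIntegral.integral_sub hf.intervalIntegrable
      intervalIntegrable_const, intervalIntegral.integral_const, hFsub, smul_eq_mul]
    field_simp
  rw [hslope, smul_eq_mul, norm_mul, norm_inv, Real.norm_eq_abs, Real.norm_eq_abs]
  refine mul_le_mul_of_nonneg_left ?_ (inv_nonneg.2 (abs_nonneg _))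
  calc |∫ τ in t..s, (f τ - f t)| = ‖∫ τ in t..s, (f τ - f t)‖ := (Real.norm_eq_abs _).symm
    _ ≤ ∫ τ in Set.uIoc t s, ‖f τ - f t‖ := intervalIntegral.norm_integral_le_integral_norm_uIoc
    _ ≤ ∫ y in Metric.closedBall ((t+s)/2) (|s-t|/2), ‖f y - f t‖ := by
        apply setIntegral_mono_set
        · rw [hball]
          exact ((hf.integrableOn.sub (integrableOn_const
            measure_Icc_lt_top.ne)).norm)
        · exact Eventually.of_forall fun y => norm_nonneg _
        · rw [hball]
          exact HasSubset.Subset.eventuallyLE Ioc_subset_Icc_self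


/-- `A(t) = ∫₀^t a(τ) dτ`. -/
def exA (a : ℝ → ℝ) (t : ℝ) : ℝ := ∫ τ in (0:ℝ)..t, a τ

/-- The example solution `u(t,x) = exp(−A(t)) · sin x`. -/
def exU (a : ℝ → ℝ) (t x : ℝ) : ℝ := Real.exp (-exA a t) * Real.sin x

/-- `U = t^α u` solves `ℒU = F` with `F ∈ L²((0,1),L²_loc)`.
For `α ∈ (1/2,1)` and `U(t,x) = t^α u(t,x)`: (a) `U(0,·) = 0`; (b) for a.e. `t ∈ (0,1)`
and all `x`, `−∂_t U + a(t) ∂²_{xx} U = F(t,x)` with `F(t,x) = −α t^{α−1} u(t,x)`;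
(c) `F ∈ L²((0,1),L²_loc(ℝ))`. -/
theorem statement_16 (ν M : ℝ) (hν : 0 < ν) (hM : 0 < M) (a : ℝ → ℝ) (ha : Measurable a)
    (hbd : ∀ᵐ t ∂ volume.restrict (Set.Ici 0), ν ≤ a t ∧ a t ≤ M)
    (α : ℝ) (hα : α ∈ Set.Ioo (1/2 : ℝ) 1) :
    (∀ x : ℝ, (0 : ℝ) ^ α * exU a 0 x = 0) ∧
    (∀ᵐ t ∂ volume.restrict (Set.Ioo (0:ℝ) 1), ∀ x : ℝ,
      ∃ d : ℝ, HasDerivAt (fun s : ℝ => s ^ α * exU a s x) d t ∧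
        -d + a t * deriv (deriv (fun y => t ^ α * exU a t y)) x
          = -α * t ^ (α - 1) * exU a t x) ∧
    (∀ R : ℝ, 0 < R →
      MemLp (fun p : ℝ × ℝ => -α * p.1 ^ (α - 1) * exU a p.1 p.2) 2
        ((volume.restrict (Set.Ioo (0:ℝ) 1)).prod (volume.restrict (Set.Icc (-R) R)))) := by
  obtain ⟨hα1, hα2⟩ := hα
  have hα0 : (0:ℝ) < α := by linarith
  set f : ℝ → ℝ := (Ioo (0:ℝ) 1).indicator a with hf_def
  have hbd' : ∀ᵐ τ : ℝ, τ ∈ Ici (0:ℝ) → (ν ≤ a τ ∧ a τ ≤ M) :=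
    (ae_restrict_iff' measurableSet_Ici).1 hbd
  have hf_bound : ∀ᵐ τ : ℝ, ‖f τ‖ ≤ (Ioo (0:ℝ) 1).indicator (fun _ => M) τ := by
    filter_upwards [hbd'] with τ hτ
    by_cases h : τ ∈ Ioo (0:ℝ) 1
    · rw [hf_def, indicator_of_mem h, indicator_of_mem h]
      have := hτ h.1.le
      rw [Real.norm_eq_abs, abs_le]
      constructor <;> linarith [hν.le]
    · rw [hf_def, indicator_of_notMem h, indicator_of_notMem h]
      simp
  have hf_nonneg : ∀ᵐ τ : ℝ, 0 ≤ f τ := by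
    filter_upwards [hbd'] with τ hτ
    by_cases h : τ ∈ Ioo (0:ℝ) 1
    · rw [hf_def, indicator_of_mem h]
      have := hτ h.1.le
      linarith
    · rw [hf_def, indicator_of_notMem h]
  have hf_meas : Measurable f := ha.indicator measurableSet_Ioo
  have hf_int : Integrable f volume := by
    refine Integrable.mono' ?_ hf_meas.aestronglyMeasurable hf_bound
    exact (integrable_indicator_iff measurableSet_Ioo).2
      (integrableOn_const measure_Ioo_lt_top.ne)
  have hB_cont : Continuous (fun s => ∫ τ in (0:ℝ)..s, f τ) := hf_int.continuous_primitive 0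
  have hAB : ∀ s ∈ Ioo (0:ℝ) 1, exA a s = ∫ τ in (0:ℝ)..s, f τ := by
    intro s hs
    have hsub : Ioc (0:ℝ) s ⊆ Ioo 0 1 := fun τ hτ => ⟨hτ.1, lt_of_le_of_lt hτ.2 hs.2⟩
    rw [exA, intervalIntegral.integral_of_le hs.1.le, intervalIntegral.integral_of_le hs.1.le,
      hf_def, setIntegral_indicator measurableSet_Ioo, inter_eq_self_of_subset_left hsub]
  have hB_nonneg : ∀ s : ℝ, 0 ≤ s → 0 ≤ ∫ τ in (0:ℝ)..s, f τ := by
    intro s hs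
    rw [intervalIntegral.integral_of_le hs]
    exact setIntegral_nonneg_of_ae hf_nonneg
  have hb : ∀ᵐ t ∂ volume.restrict (Ioo (0:ℝ) 1), ∀ x : ℝ,
      ∃ d : ℝ, HasDerivAt (fun s : ℝ => s ^ α * exU a s x) d t ∧
        -d + a t * deriv (deriv (fun y => t ^ α * exU a t y)) x
          = -α * t ^ (α - 1) * exU a t x := by
    filter_upwards [ae_restrict_mem measurableSet_Ioo,
      ae_restrict_of_ae (ae_hasDerivAt_primitive hf_int)] with t htI htB
    have hft : f t = a t := indicator_of_mem htI a
    have hev : exA a =ᶠ[nhds t] (fun s => ∫ τ in (0:ℝ)..s, f τ) :=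
      eventually_of_mem (isOpen_Ioo.mem_nhds htI) (fun s hs => hAB s hs)
    have hA : HasDerivAt (exA a) (a t) t := by
      rw [← hft]
      exact htB.congr_of_eventuallyEq hev
    intro x
    have hg : HasDerivAt (fun s => Real.exp (-exA a s)) (Real.exp (-exA a t) * -(a t)) t :=
      (hA.neg).exp
    have hq : HasDerivAt (fun s => exU a s x)
        (Real.exp (-exA a t) * -(a t) * Real.sin x) t := hg.mul_const _
    have hp : HasDerivAt (fun s : ℝ => s ^ α) (α * t ^ (α - 1)) t :=
      Real.hasDerivAt_rpow_const (Or.inl (ne_of_gt htI.1))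
    refine ⟨_, hp.mul hq, ?_⟩
    have hU : (fun y => t ^ α * exU a t y)
        = fun y => (t ^ α * Real.exp (-exA a t)) * Real.sin y := by
      funext y; rw [exU]; ring
    have hd1 : deriv (fun y => t ^ α * exU a t y)
        = fun y => (t ^ α * Real.exp (-exA a t)) * Real.cos y := by
      rw [hU]; funext y
      exact ((Real.hasDerivAt_sin y).const_mul _).deriv
    have hd2 : deriv (deriv (fun y => t ^ α * exU a t y)) x
        = (t ^ α * Real.exp (-exA a t)) * -Real.sin x := by
      rw [hd1]
      exact ((Real.hasDerivAt_cos x).const_mul _).deriv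
    rw [hd2]
    simp only [exU]
    ring
  have hc : ∀ R : ℝ, 0 < R →
      MemLp (fun p : ℝ × ℝ => -α * p.1 ^ (α - 1) * exU a p.1 p.2) 2
        ((volume.restrict (Ioo (0:ℝ) 1)).prod (volume.restrict (Icc (-R) R))) := by
    intro R hR
    set μ := (volume.restrict (Ioo (0:ℝ) 1)).prod (volume.restrict (Icc (-R) R)) with hμ
    have hmem : ∀ᵐ p : ℝ × ℝ ∂μ, p.1 ∈ Ioo (0:ℝ) 1 := by
      rw [hμ, Measure.prod_restrict]
      filter_upwards [ae_restrict_mem (measurableSet_Ioo.prod measurableSet_Icc)] with p hp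
      exact hp.1
    have hG_meas : AEStronglyMeasurable (fun p : ℝ × ℝ =>
        -α * p.1 ^ (α - 1) * (Real.exp (-(∫ τ in (0:ℝ)..p.1, f τ)) * Real.sin p.2)) μ := by
      apply Measurable.aestronglyMeasurable
      have hm0 : Measurable (fun t : ℝ => -α * t ^ (α - 1)) :=
        measurable_const.mul (measurable_id.pow measurable_const)
      have h1 : Measurable (fun p : ℝ × ℝ => -α * p.1 ^ (α - 1)) := hm0.comp measurable_fst
      have h2 : Measurable (fun p : ℝ × ℝ =>
          Real.exp (-(∫ τ in (0:ℝ)..p.1, f τ)) * Real.sin p.2) :=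
        (((hB_cont.comp continuous_fst).neg.rexp).mul
          (Real.continuous_sin.comp continuous_snd)).measurable
      exact h1.mul h2
    have hFG : (fun p : ℝ × ℝ => -α * p.1 ^ (α - 1) * exU a p.1 p.2)
        =ᵐ[μ] fun p => -α * p.1 ^ (α - 1) *
          (Real.exp (-(∫ τ in (0:ℝ)..p.1, f τ)) * Real.sin p.2) := by
      filter_upwards [hmem] with p hp
      rw [exU, hAB p.1 hp]
    have hF_meas : AEStronglyMeasurable
        (fun p : ℝ × ℝ => -α * p.1 ^ (α - 1) * exU a p.1 p.2) μ := hG_meas.congr hFG.symm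
    rw [memLp_two_iff_integrable_sq hF_meas]
    have hf1 : Integrable (fun t : ℝ => (α * t ^ (α - 1) * Real.exp (-(∫ τ in (0:ℝ)..t, f τ)))^2)
        (volume.restrict (Ioo (0:ℝ) 1)) := by
      refine Integrable.mono' (g := fun t => α^2 * t ^ (2*α - 2)) ?_ ?_ ?_
      · have h1 : IntervalIntegrable (fun t : ℝ => t ^ (2*α - 2)) volume 0 1 :=
          intervalIntegral.intervalIntegrable_rpow' (by linarith)
        have h2 : IntegrableOn (fun t : ℝ => t ^ (2*α-2)) (Ioo (0:ℝ) 1) volume :=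
          ((intervalIntegrable_iff_integrableOn_Ioc_of_le (by norm_num : (0:ℝ) ≤ 1)).1
            h1).mono_set Ioo_subset_Ioc_self
        exact h2.const_mul _
      · apply Measurable.aestronglyMeasurable
        have hm1 : Measurable (fun t : ℝ => α * t ^ (α-1)) :=
          measurable_const.mul (measurable_id.pow measurable_const)
        exact ((hm1.mul hB_cont.neg.rexp.measurable).pow_const 2)
      · filter_upwards [ae_restrict_mem measurableSet_Ioo] with t ht
        have h0 : (0:ℝ) < t := ht.1
        have he : Real.exp (-(∫ τ in (0:ℝ)..t, f τ)) ≤ 1 :=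
          Real.exp_le_one_iff.2 (neg_nonpos.2 (hB_nonneg t h0.le))
        have hep : 0 < Real.exp (-(∫ τ in (0:ℝ)..t, f τ)) := Real.exp_pos _
        have hrp : (t ^ (α-1))^(2:ℕ) = t ^ (2*α-2) := by
          rw [← Real.rpow_natCast (t ^ (α-1)) 2, ← Real.rpow_mul h0.le]
          congr 1
          push_cast
          ring
        rw [Real.norm_eq_abs, abs_of_nonneg (sq_nonneg _)]
        have hexp : (α * t ^ (α-1) * Real.exp (-(∫ τ in (0:ℝ)..t, f τ)))^2
            = α^2 * (t^(α-1))^2 * (Real.exp (-(∫ τ in (0:ℝ)..t, f τ)))^2 := by ring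
        rw [hexp, hrp]
        have ht0 : 0 ≤ t ^ (2*α-2) := Real.rpow_nonneg h0.le _
        have he2 : (Real.exp (-(∫ τ in (0:ℝ)..t, f τ)))^2 ≤ 1 := by nlinarith
        exact mul_le_of_le_one_right (by positivity) he2
    have hg1 : Integrable (fun x : ℝ => (Real.sin x)^2) (volume.restrict (Icc (-R) R)) := by
      refine Integrable.mono' (g := fun _ => 1)
        (integrableOn_const measure_Icc_lt_top.ne)
        ((Real.continuous_sin.pow 2).aestronglyMeasurable) ?_
      filter_upwards with x
      rw [Real.norm_eq_abs, abs_of_nonneg (sq_nonneg _)]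
      nlinarith [Real.neg_one_le_sin x, Real.sin_le_one x]
    have hprod : Integrable (fun p : ℝ × ℝ =>
        ((α * p.1 ^ (α - 1) * Real.exp (-(∫ τ in (0:ℝ)..p.1, f τ)))^2) * (Real.sin p.2)^2) μ :=
      hf1.mul_prod hg1
    refine hprod.congr ?_
    filter_upwards [hmem] with p hp
    rw [exU, hAB p.1 hp]
    ring
  refine ⟨fun x => ?_, hb, hc⟩
  rw [Real.zero_rpow (ne_of_gt hα0), zero_mul]

end
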